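/- Let T = T₁ ⊕ T₂ be a silting object in a triangulated category T with T₁ indecomposable, and suppose T₁ admits a left add(T₂)-approximation f: T₁ → T̃₂. Then Cone(f) ⊕ T₂ is again a silting object in T. -/

import Mathlib

open CategoryTheory Limits Pretriangulated

variable {C : Type*} [Category C] [Preadditive C] [HasZeroObject C]
  [HasShift C ℤ] [∀ n : ℤ, (CategoryTheory.shiftFunctor C n).Additive]
  [Pretriangulated C] [HasBinaryBiproducts C] [HasFiniteBiproducts C]

/-- `X` lies in `add T`: `X` is a direct summand of a finite direct sum of
copies of `T`. -/
def InAdd (X T : C) : Prop :=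
  ∃ (n : ℕ) (i : X ⟶ ⨁ fun _ : Fin n => T) (p : (⨁ fun _ : Fin n => T) ⟶ X),
    i ≫ p = 𝟙 X

/-- The thick subcategory generated by `G`: the closure of `G` under
isomorphisms, shifts, extensions (distinguished triangles) and direct
summands. -/
inductive ThickClosure (G : C) : C → Prop
  | base : ThickClosure G G
  | iso {X Y : C} : (X ≅ Y) → ThickClosure G X → ThickClosure G Y
  | shift (X : C) (n : ℤ) : ThickClosure G X → ThickClosure G (X⟦n⟧)
  | ext {X Y Z : C} {f : X ⟶ Y} {g : Y ⟶ Z} {h : Z ⟶ X⟦(1 : ℤ)⟧} :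
      (Triangle.mk f g h ∈ distTriang C) →
      ThickClosure G X → ThickClosure G Z → ThickClosure G Y
  | retract {X Y : C} (i : X ⟶ Y) (p : Y ⟶ X) :
      i ≫ p = 𝟙 X → ThickClosure G Y → ThickClosure G X

/-- `T` is a silting object: it has no positive self-extensions and generates
the whole category as a thick subcategory. -/
def IsSilting (T : C) : Prop :=
  (∀ i : ℤ, 0 < i → ∀ f : T ⟶ T⟦i⟧, f = 0) ∧ ∀ X : C, ThickClosure T X

section Aux

lemma homZero_of_retract_src {X Y B : C} (i : X ⟶ Y) (p : Y ⟶ X) (hip : i ≫ p = 𝟙 X)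
    (hz : ∀ φ : Y ⟶ B, φ = 0) : ∀ φ : X ⟶ B, φ = 0 := fun φ => by
  rw [← Category.id_comp φ, ← hip, Category.assoc, hz (p ≫ φ), comp_zero]

lemma homZero_of_retract_tgt {X Y A : C} (i : X ⟶ Y) (p : Y ⟶ X) (hip : i ≫ p = 𝟙 X)
    (hz : ∀ φ : A ⟶ Y, φ = 0) : ∀ φ : A ⟶ X, φ = 0 := fun φ => by
  rw [← Category.comp_id φ, ← hip, ← Category.assoc, hz (φ ≫ i), zero_comp]

lemma homZero_of_iso_tgt {A X Y : C} (e : X ≅ Y) (hz : ∀ φ : A ⟶ Y, φ = 0) :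
    ∀ φ : A ⟶ X, φ = 0 :=
  homZero_of_retract_tgt e.hom e.inv e.hom_inv_id hz

lemma homZero_biproduct_tgt {A B : C} (hz : ∀ φ : A ⟶ B, φ = 0) (n : ℕ) :
    ∀ φ : A ⟶ ⨁ (fun _ : Fin n => B), φ = 0 := fun φ => by
  apply biproduct.hom_ext
  intro j
  rw [zero_comp]
  exact hz _

lemma homZero_biproduct_src {A B : C} (hz : ∀ φ : B ⟶ A, φ = 0) (n : ℕ) :
    ∀ φ : (⨁ (fun _ : Fin n => B)) ⟶ A, φ = 0 := fun φ => by
  apply biproduct.hom_ext'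
  intro j
  rw [comp_zero]
  exact hz _

lemma homZero_of_inAdd_src {X T B : C} (hX : InAdd X T) (hz : ∀ φ : T ⟶ B, φ = 0) :
    ∀ φ : X ⟶ B, φ = 0 := by
  obtain ⟨n, i, p, hip⟩ := hX
  exact homZero_of_retract_src i p hip (homZero_biproduct_src hz n)

lemma homZero_of_inAdd_tgt {X T A : C} (hX : InAdd X T) (hz : ∀ φ : A ⟶ T, φ = 0) :
    ∀ φ : A ⟶ X, φ = 0 := by
  obtain ⟨n, i, p, hip⟩ := hX
  exact homZero_of_retract_tgt i p hip (homZero_biproduct_tgt hz n)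

lemma inAdd_shift {X T : C} (hX : InAdd X T) (n : ℤ) : InAdd (X⟦n⟧) (T⟦n⟧) := by
  obtain ⟨m, i, p, hip⟩ := hX
  refine ⟨m, (shiftFunctor C n).map i ≫ ((shiftFunctor C n).mapBiproduct _).hom,
    ((shiftFunctor C n).mapBiproduct _).inv ≫ (shiftFunctor C n).map p, ?_⟩
  rw [Category.assoc, Iso.hom_inv_id_assoc, ← Functor.map_comp, hip, CategoryTheory.Functor.map_id]

lemma inAdd_self (T : C) : InAdd T T := by
  refine ⟨1, biproduct.lift (fun _ => 𝟙 T), biproduct.π _ 0, ?_⟩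
  simp

lemma summand_homZero {A B T : C} (iA : A ⟶ T) (pA : T ⟶ A) (hA : iA ≫ pA = 𝟙 A)
    (iB : B ⟶ T) (pB : T ⟶ B) (hB : iB ≫ pB = 𝟙 B) (j : ℤ)
    (hT : ∀ ψ : T ⟶ T⟦j⟧, ψ = 0) : ∀ φ : A ⟶ B⟦j⟧, φ = 0 := fun φ => by
  have hz : pA ≫ φ ≫ (shiftFunctor C j).map iB = 0 := hT _
  calc φ = (iA ≫ pA) ≫ φ ≫ (shiftFunctor C j).map (iB ≫ pB) := by
        rw [hA, hB, CategoryTheory.Functor.map_id, Category.comp_id, Category.id_comp]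
    _ = iA ≫ (pA ≫ φ ≫ (shiftFunctor C j).map iB) ≫ (shiftFunctor C j).map pB := by
        simp [Functor.map_comp]
    _ = 0 := by rw [hz, zero_comp, comp_zero]

lemma homZero_shift_one {A B : C} (hz : ∀ φ₀ : A ⟶ B, φ₀ = 0) :
    ∀ ψ : A⟦(1 : ℤ)⟧ ⟶ B⟦(1 : ℤ)⟧, ψ = 0 := fun ψ => by
  obtain ⟨ψ₀, rfl⟩ := (shiftFunctor C (1 : ℤ)).map_surjective ψ
  rw [hz ψ₀, Functor.map_zero]

lemma homZero_biprod {A₁ A₂ B₁ B₂ : C} (h₁₁ : ∀ φ : A₁ ⟶ B₁, φ = 0)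
    (h₁₂ : ∀ φ : A₁ ⟶ B₂, φ = 0) (h₂₁ : ∀ φ : A₂ ⟶ B₁, φ = 0)
    (h₂₂ : ∀ φ : A₂ ⟶ B₂, φ = 0) : ∀ φ : A₁ ⊞ A₂ ⟶ B₁ ⊞ B₂, φ = 0 := fun φ => by
  apply biprod.hom_ext' <;> apply biprod.hom_ext <;>
    simp only [Category.assoc, zero_comp, comp_zero] <;>
    first
      | simpa using h₁₁ (biprod.inl ≫ φ ≫ biprod.fst)
      | simpa using h₁₂ (biprod.inl ≫ φ ≫ biprod.snd)
      | simpa using h₂₁ (biprod.inr ≫ φ ≫ biprod.fst)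
      | simpa using h₂₂ (biprod.inr ≫ φ ≫ biprod.snd)

lemma thickClosure_trans {G G' X : C} (hG : ThickClosure G' G) (hX : ThickClosure G X) :
    ThickClosure G' X := by
  induction hX with
  | base => exact hG
  | iso e _ ih => exact .iso e ih
  | shift X n _ ih => exact .shift X n ih
  | ext hdt _ _ ih₁ ih₂ => exact .ext hdt ih₁ ih₂
  | retract i p hip _ ih => exact .retract i p hip ih

lemma thickClosure_biprod {G X Y : C} (hX : ThickClosure G X) (hY : ThickClosure G Y) :
    ThickClosure G (X ⊞ Y) :=
  .ext (binaryBiproductTriangle_distinguished X Y) hX hY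

lemma thickClosure_finBiproduct {G T : C} (hT : ThickClosure G T) (n : ℕ) :
    ThickClosure G (⨁ fun _ : Fin n => T) := by
  induction n with
  | zero =>
    refine .retract 0 0 ?_ hT
    rw [comp_zero]
    refine ((biproduct.total).symm.trans ?_).symm
    simp
  | succ n ih =>
    refine .retract (biprod.lift (biproduct.π (fun _ : Fin (n+1) => T) 0)
        (biproduct.lift fun k : Fin n => biproduct.π (fun _ : Fin (n+1) => T) k.succ))
      (biprod.desc (biproduct.ι (fun _ : Fin (n+1) => T) 0)
        (biproduct.desc fun k : Fin n => biproduct.ι (fun _ : Fin (n+1) => T) k.succ)) ?_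
      (thickClosure_biprod hT ih)
    rw [biprod.lift_desc, biproduct.lift_desc, ← biproduct.total]
    exact (Fin.sum_univ_succ fun j => biproduct.π (fun _ : Fin (n+1) => T) j ≫
      biproduct.ι (fun _ : Fin (n+1) => T) j).symm

end Aux

/-- Let `T = T₁ ⊞ T₂` be a silting object in a triangulated
category `C` with `T₁` indecomposable, and suppose `T₁` admits a left
`add T₂`-approximation `f : T₁ ⟶ E`.  Complete `f` to a distinguished triangle
`T₁ ⟶ E ⟶ Cf ⟶ T₁⟦1⟧`.  Then `Cf ⊞ T₂` is again a silting object. -/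
theorem silting_mutation_is_silting (T₁ T₂ : C)
    (hT₁ : ∀ (X Y : C), ¬(Nonempty (T₁ ≅ X ⊞ Y) ∧ ¬IsZero X ∧ ¬IsZero Y))
    (hsilt : IsSilting (T₁ ⊞ T₂))
    (E : C) (hE : InAdd E T₂) (f : T₁ ⟶ E)
    (happrox : ∀ (X : C), InAdd X T₂ → ∀ g : T₁ ⟶ X, ∃ h : E ⟶ X, f ≫ h = g)
    (Cf : C) (g : E ⟶ Cf) (h : Cf ⟶ T₁⟦(1 : ℤ)⟧)
    (hdist : Triangle.mk f g h ∈ distTriang C) :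
    IsSilting (Cf ⊞ T₂) := by
  clear hT₁
  obtain ⟨hvan, hgen⟩ := hsilt
  -- Hom-vanishing between the summands of the old silting object
  have h11 : ∀ j : ℤ, 0 < j → ∀ φ : T₁ ⟶ T₁⟦j⟧, φ = 0 := fun j hj =>
    summand_homZero biprod.inl biprod.fst biprod.inl_fst biprod.inl biprod.fst biprod.inl_fst
      j (hvan j hj)
  have h12 : ∀ j : ℤ, 0 < j → ∀ φ : T₁ ⟶ T₂⟦j⟧, φ = 0 := fun j hj =>
    summand_homZero biprod.inl biprod.fst biprod.inl_fst biprod.inr biprod.snd biprod.inr_snd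
      j (hvan j hj)
  have h21 : ∀ j : ℤ, 0 < j → ∀ φ : T₂ ⟶ T₁⟦j⟧, φ = 0 := fun j hj =>
    summand_homZero biprod.inr biprod.snd biprod.inr_snd biprod.inl biprod.fst biprod.inl_fst
      j (hvan j hj)
  have h22 : ∀ j : ℤ, 0 < j → ∀ φ : T₂ ⟶ T₂⟦j⟧, φ = 0 := fun j hj =>
    summand_homZero biprod.inr biprod.snd biprod.inr_snd biprod.inr biprod.snd biprod.inr_snd
      j (hvan j hj)
  -- Hom(T₂, E⟦j⟧) = 0 for j > 0
  have hEt : ∀ j : ℤ, 0 < j → ∀ φ : T₂ ⟶ E⟦j⟧, φ = 0 := fun j hj =>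
    homZero_of_inAdd_tgt (inAdd_shift hE j) (h22 j hj)
  -- Hom(T₂, Cf⟦j⟧) = 0 for j > 0
  have hT₂Cf : ∀ j : ℤ, 0 < j → ∀ φ : T₂ ⟶ Cf⟦j⟧, φ = 0 := by
    intro j hj φ
    have hd := Triangle.shift_distinguished (Triangle.mk f g h) hdist j
    have hz : φ ≫ ((Triangle.shiftFunctor C j).obj (Triangle.mk f g h)).mor₃ = 0 := by
      apply homZero_of_iso_tgt (((shiftFunctorAdd' C j 1 (j+1) rfl).app T₁).symm)
        (h21 (j+1) (by omega))
    obtain ⟨ψ, hψ⟩ := Triangle.coyoneda_exact₃ _ hd φ hz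
    rw [hψ, hEt j hj ψ]
    exact zero_comp
  -- Hom(Cf, T₂⟦j⟧) = 0 for j > 0 (this uses the approximation property for j = 1)
  have hXT₂ : ∀ j : ℤ, 0 < j → ∀ φ : Cf ⟶ T₂⟦j⟧, φ = 0 := by
    intro j hj φ
    have h1 : g ≫ φ = 0 := homZero_of_inAdd_src hE (h22 j hj) (g ≫ φ)
    obtain ⟨ψ, hψ⟩ := Triangle.yoneda_exact₃ _ hdist φ h1
    dsimp only [Triangle.mk] at hψ
    by_cases hj1 : j = 1
    · subst hj1
      obtain ⟨ψ₀, rfl⟩ := (shiftFunctor C (1 : ℤ)).map_surjective ψ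
      obtain ⟨χ, hχ⟩ := happrox T₂ (inAdd_self T₂) ψ₀
      have hzero : h ≫ (shiftFunctor C (1 : ℤ)).map f = 0 :=
        comp_distTriang_mor_zero₃₁ _ hdist
      rw [hψ, ← hχ]
      exact (show h ≫ (shiftFunctor C (1 : ℤ)).map (f ≫ χ) = 0 by
        rw [Functor.map_comp, ← Category.assoc, hzero, zero_comp])
    · have e := (shiftFunctorAdd' C (j-1) 1 j (by omega)).app T₂
      have hψe : ψ ≫ e.hom = 0 := homZero_shift_one (h12 (j-1) (by omega)) (ψ ≫ e.hom)
      have : ψ = 0 := by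
        rw [← Category.comp_id ψ, ← e.hom_inv_id, ← Category.assoc, hψe, zero_comp]
      rw [hψ, this]
      exact comp_zero
  -- Hom(Cf, E⟦j⟧) = 0 for j > 0
  have hXE : ∀ j : ℤ, 0 < j → ∀ φ : Cf ⟶ E⟦j⟧, φ = 0 := fun j hj =>
    homZero_of_inAdd_tgt (inAdd_shift hE j) (hXT₂ j hj)
  -- Hom(Cf, T₁⟦j⟧) = 0 for j > 1
  have hXT₁ : ∀ j : ℤ, 1 < j → ∀ φ : Cf ⟶ T₁⟦j⟧, φ = 0 := by
    intro j hj φ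
    have h1 : g ≫ φ = 0 := homZero_of_inAdd_src hE (h21 j (by omega)) (g ≫ φ)
    obtain ⟨ψ, hψ⟩ := Triangle.yoneda_exact₃ _ hdist φ h1
    dsimp only [Triangle.mk] at hψ
    have e := (shiftFunctorAdd' C (j-1) 1 j (by omega)).app T₁
    have hψe : ψ ≫ e.hom = 0 := homZero_shift_one (h11 (j-1) (by omega)) (ψ ≫ e.hom)
    have : ψ = 0 := by
      rw [← Category.comp_id ψ, ← e.hom_inv_id, ← Category.assoc, hψe, zero_comp]
    rw [hψ, this]
    exact comp_zero
  -- Hom(Cf, Cf⟦j⟧) = 0 for j > 0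
  have hXCf : ∀ j : ℤ, 0 < j → ∀ φ : Cf ⟶ Cf⟦j⟧, φ = 0 := by
    intro j hj φ
    have hd := Triangle.shift_distinguished (Triangle.mk f g h) hdist j
    have hz : φ ≫ ((Triangle.shiftFunctor C j).obj (Triangle.mk f g h)).mor₃ = 0 := by
      apply homZero_of_iso_tgt (((shiftFunctorAdd' C j 1 (j+1) rfl).app T₁).symm)
        (hXT₁ (j+1) (by omega))
    obtain ⟨ψ, hψ⟩ := Triangle.coyoneda_exact₃ _ hd φ hz
    rw [hψ, hXE j hj ψ]
    exact zero_comp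
  constructor
  · -- no positive self-extensions
    intro i hi φ
    haveI : PreservesBinaryBiproducts (shiftFunctor C i) :=
      preservesBinaryBiproducts_of_preservesBiproducts _
    exact homZero_of_iso_tgt ((shiftFunctor C i).mapBiprod Cf T₂)
      (homZero_biprod (hXCf i hi) (hXT₂ i hi) (hT₂Cf i hi) (h22 i hi)) φ
  · -- generation
    intro X
    have c₂ : ThickClosure (Cf ⊞ T₂) T₂ := .retract biprod.inr biprod.snd biprod.inr_snd .base
    have cCf : ThickClosure (Cf ⊞ T₂) Cf := .retract biprod.inl biprod.fst biprod.inl_fst .base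
    have cE : ThickClosure (Cf ⊞ T₂) E := by
      obtain ⟨n, i, p, hip⟩ := hE
      exact .retract i p hip (thickClosure_finBiproduct c₂ n)
    have cT₁ : ThickClosure (Cf ⊞ T₂) T₁ := by
      have hd := inv_rot_of_distTriang _ hdist
      exact .ext hd (.shift Cf (-1) cCf) cE
    exact thickClosure_trans (thickClosure_biprod cT₁ c₂) (hgen X)
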